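/- Let G be a single unicast index coding problem on [N] such that the cyclic permutation σ of [N] defined by σ(i) = (i mod N) + 1 is an automorphism of G. Then for every ℓ ≥ minrk_q(G) there exists a valid vector linear index code for G over F_q with message length N, broadcast rate ℓ, and locality at most ℓ(N−ℓ+1)/N; consequently β*_{G,q}( ℓ(N−ℓ+1)/N ) ≤ ℓ. -/

import Mathlib

/-- A valid vector linear index code for the problem with side information sets `K`:
messages are indexed by pairs `(i, m) : Fin N × Fin M`. -/
def ValidVectorLinearCode {N M ℓ : ℕ} (q : Type) [Field q]
    (K : Fin N → Finset (Fin N))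
    (L : Matrix (Fin N × Fin M) (Fin ℓ) q)
    (R : Fin N → Finset (Fin ℓ)) : Prop :=
  ∀ i : Fin N, ∀ m : Fin M,
    ∃ u : Fin N × Fin M → q,
      (∀ p : Fin N × Fin M, u p ≠ 0 → p.1 ∈ K i) ∧
      u + Pi.single (i, m) 1 ∈
        Submodule.span q ((fun k (p : Fin N × Fin M) => L p k) '' (R i : Set (Fin ℓ)))

/-- The minrank of the side information graph over `F_q`. -/
noncomputable def minrk (q : Type) [Field q] {N : ℕ} (K : Fin N → Finset (Fin N)) : ℕ :=
  sInf {n : ℕ | ∃ A : Matrix (Fin N) (Fin N) q,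
    (∀ i, A i i = 1) ∧ (∀ i j, j ≠ i → j ∉ K i → A j i = 0) ∧ A.rank = n}

/-- If the cyclic shift `σ(i) = i + 1` of `Fin N` is an automorphism of `G`
(`j ∈ K i ↔ j+1 ∈ K (i+1)`), then for every `ℓ ≥ minrk_q(G)` there exists a valid vector
linear index code for `G` over `F_q` with message length `N`, broadcast rate `ℓ`
(codelength `N·ℓ`), and locality at most `ℓ(N−ℓ+1)/N`; consequently
`β*_{G,q}(ℓ(N−ℓ+1)/N) ≤ ℓ`. -/
theorem exists_col_basis {q : Type} [Field q] {N ℓ : ℕ} (col : Fin N → (Fin N → q))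
    (h : Module.finrank q (Submodule.span q (Set.range col)) ≤ ℓ) (hN : ℓ ≤ N) :
    ∃ B : Finset (Fin N), B.card = ℓ ∧ ∀ i, col i ∈ Submodule.span q (col '' ↑B) := by
  obtain ⟨s, hsub, hspan, hind⟩ := exists_linearIndependent q (Set.range col)
  have hfin : s.Finite := hind.setFinite
  have : Fintype s := hfin.fintype
  have hcard : s.toFinset.card ≤ ℓ := by
    rw [← finrank_span_set_eq_card hind, hspan]; exact h
  have hchoice : ∀ v ∈ s.toFinset, ∃ i : Fin N, col i = v := by
    intro v hv
    exact hsub (Set.mem_toFinset.mp hv)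
  classical
  choose f hf using hchoice
  set B₀ : Finset (Fin N) := s.toFinset.attach.image (fun v => f v.1 v.2) with hB₀
  have hB₀card : B₀.card ≤ ℓ := le_trans (le_trans Finset.card_image_le (by simp)) hcard
  have hB₀span : ∀ i, col i ∈ Submodule.span q (col '' ↑B₀) := by
    intro i
    have h1 : col i ∈ Submodule.span q (Set.range col) := Submodule.subset_span ⟨i, rfl⟩
    rw [← hspan] at h1
    refine Submodule.span_mono ?_ h1
    intro v hv
    refine ⟨f v (Set.mem_toFinset.mpr hv), ?_, hf _ _⟩
    simp [hB₀]
    exact ⟨v, hv, rfl⟩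
  obtain ⟨B, hBsub, hBcard⟩ := Finset.exists_superset_card_eq hB₀card (by simpa using hN)
  refine ⟨B, hBcard, fun i => ?_⟩
  exact Submodule.span_mono (Set.image_mono  (by exact_mod_cast hBsub)) (hB₀span i)

theorem exists_coeffs {q : Type} [Field q] {N ℓ : ℕ} (col : Fin N → (Fin N → q))
    (B : Finset (Fin N)) (hB : B.card = ℓ)
    (hspan : ∀ i, col i ∈ Submodule.span q (col '' ↑B)) (j : Fin N) :
    ∃ c : Fin ℓ → q, (∑ t, c t • col ((B.orderIsoOfFin hB t : Fin N)) = col j) ∧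
      (j ∈ B → ∀ t, c t ≠ 0 → (B.orderIsoOfFin hB t : Fin N) = j) := by
  classical
  set b : Fin ℓ → Fin N := fun t => (B.orderIsoOfFin hB t : Fin N) with hb
  have hrange : Set.range b = (B : Set (Fin N)) := by
    ext v
    constructor
    · rintro ⟨t, rfl⟩; exact (B.orderIsoOfFin hB t).2
    · intro hv
      exact ⟨(B.orderIsoOfFin hB).symm ⟨v, hv⟩,
        congrArg Subtype.val ((B.orderIsoOfFin hB).apply_symm_apply ⟨v, hv⟩)⟩
  by_cases hj : j ∈ B
  · obtain ⟨t₀, ht₀⟩ : ∃ t₀, b t₀ = j := by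
      rw [← Set.mem_range (f := b), hrange] at *; exact hj
    refine ⟨Pi.single t₀ 1, ?_, fun _ t hc => ?_⟩
    · rw [Finset.sum_eq_single t₀]
      · rw [Pi.single_eq_same, one_smul, ← ht₀]
      · intro t _ ht; simp [Pi.single_eq_of_ne ht]
      · simp
    · by_contra hne
      apply hc
      have : t ≠ t₀ := fun h => hne (h ▸ ht₀)
      simp [Pi.single_eq_of_ne this]
  · have h1 : col j ∈ Submodule.span q (Set.range (fun t => col (b t))) := by
      have he : (fun t => col (b t)) = col ∘ b := rfl
      rw [he, Set.range_comp, hrange]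
      exact hspan j
    rw [Submodule.mem_span_range_iff_exists_fun] at h1
    obtain ⟨c, hc⟩ := h1
    exact ⟨c, hc, fun h => absurd h hj⟩

theorem main_le {N : ℕ} [NeZero N] (q : Type) [Field q]
    (K : Fin N → Finset (Fin N))
    (hshift : ∀ (m : Fin N) (i j : Fin N), j ∈ K i ↔ j + m ∈ K (i + m))
    (ℓ : ℕ) (hℓN : ℓ ≤ N)
    (A : Matrix (Fin N) (Fin N) q) (hdiag : ∀ i, A i i = 1)
    (hzero : ∀ i j, j ≠ i → j ∉ K i → A j i = 0) (hrank : A.rank ≤ ℓ) :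
    ∃ (L : Matrix (Fin N × Fin N) (Fin (N * ℓ)) q) (R : Fin N → Finset (Fin (N * ℓ))),
      ValidVectorLinearCode q K L R ∧ ∀ i, (R i).card ≤ ℓ * (N - ℓ + 1) := by
  classical
  set col : Fin N → (Fin N → q) := fun i j => A j i with hcol
  have hfr : Module.finrank q (Submodule.span q (Set.range col)) ≤ ℓ := by
    have h1 : Submodule.span q (Set.range col) = LinearMap.range A.mulVecLin := by
      rw [Matrix.range_mulVecLin]; rfl
    rw [h1]; exact hrank
  obtain ⟨B, hBcard, hBspan⟩ := exists_col_basis col hfr hℓN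
  set b : Fin ℓ → Fin N := fun t => (B.orderIsoOfFin hBcard t : Fin N) with hb
  have hbinj : Function.Injective b := fun t₁ t₂ h =>
    (B.orderIsoOfFin hBcard).injective (Subtype.ext h)
  choose c hc1 hc2 using exists_coeffs col B hBcard hBspan
  set e : Fin N × Fin ℓ ≃ Fin (N * ℓ) := finProdFinEquiv with he
  set L : Matrix (Fin N × Fin N) (Fin (N * ℓ)) q :=
    fun p k => if p.2 = (e.symm k).1 then A (p.1 - (e.symm k).1) (b (e.symm k).2) else 0 with hL
  set R : Fin N → Finset (Fin (N * ℓ)) :=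
    fun i => Finset.image e (Finset.univ.filter
      (fun mt : Fin N × Fin ℓ => i - mt.1 ∈ B → b mt.2 = i - mt.1)) with hR
  refine ⟨L, R, ?_, ?_⟩
  · intro i m
    set w : Fin N × Fin N → q := fun p => if p.2 = m then A (p.1 - m) (i - m) else 0 with hw
    refine ⟨w - Pi.single (i, m) 1, ?_, ?_⟩
    · intro p hp
      have hpne : p ≠ (i, m) := by
        rintro rfl
        apply hp
        simp [hw, Pi.sub_apply, hdiag]
      have hwp : w p ≠ 0 := by
        intro h0; apply hp; simp [Pi.sub_apply, h0, Pi.single_eq_of_ne hpne]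
      have hpm : p.2 = m := by by_contra h; exact hwp (by simp [hw, h])
      have hA : A (p.1 - m) (i - m) ≠ 0 := by
        intro h; exact hwp (by simp [hw, hpm, h])
      have h1 : p.1 ≠ i := fun h => hpne (Prod.ext h hpm)
      have h2 : p.1 - m ≠ i - m := fun h => h1 (by
        have := congrArg (· + m) h
        simpa [sub_add_cancel] using this)
      have h3 : p.1 - m ∈ K (i - m) := by
        by_contra h3; exact hA (hzero _ _ h2 h3)
      have h4 := (hshift m (i - m) (p.1 - m)).mp h3
      simpa [sub_add_cancel] using h4
    · rw [sub_add_cancel]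
      have hsum : w = ∑ t, c (i - m) t • (fun p : Fin N × Fin N => L p (e (m, t))) := by
        funext p
        rw [Finset.sum_apply]
        simp only [Pi.smul_apply, smul_eq_mul, hL, Equiv.symm_apply_apply]
        by_cases hpm : p.2 = m
        · simp only [hw, hpm, if_true]
          have hpt := congrFun (hc1 (i - m)) (p.1 - m)
          simp only [Finset.sum_apply, Pi.smul_apply, smul_eq_mul] at hpt
          exact hpt.symm
        · simp [hw, hpm]
      rw [hsum]
      apply Submodule.sum_mem
      intro t _
      by_cases hct : c (i - m) t = 0
      · simp [hct]
      · apply Submodule.smul_mem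
        apply Submodule.subset_span
        refine ⟨e (m, t), ?_, rfl⟩
        simp only [hR, Finset.coe_image, Set.mem_image, Finset.mem_coe,
          Finset.mem_filter, Finset.mem_univ, true_and]
        exact ⟨(m, t), fun hmem => hc2 (i - m) hmem t hct, rfl⟩
  · intro i
    rw [hR]
    rw [Finset.card_image_of_injective _ e.injective]
    rw [Finset.card_filter]
    rw [Fintype.sum_prod_type]
    have hstep : ∀ m : Fin N,
        (∑ t : Fin ℓ, if i - m ∈ B → b t = i - m then 1 else 0)
          = if i - m ∈ B then 1 else ℓ := by
      intro m
      by_cases hm : i - m ∈ B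
      · set t₀ : Fin ℓ := (B.orderIsoOfFin hBcard).symm ⟨i - m, hm⟩ with ht₀
        have hbt₀ : b t₀ = i - m :=
          congrArg Subtype.val ((B.orderIsoOfFin hBcard).apply_symm_apply ⟨i - m, hm⟩)
        have hcond : ∀ t : Fin ℓ, (i - m ∈ B → b t = i - m) ↔ t = t₀ := by
          intro t
          constructor
          · intro h
            exact hbinj ((h hm).trans hbt₀.symm)
          · rintro rfl _
            exact hbt₀
        rw [Finset.sum_congr rfl (fun t _ => by rw [if_congr (hcond t) rfl rfl])]
        simp [hm]
      · simp only [hm, if_false]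
        have : ∀ t : Fin ℓ, (i - m ∈ B → b t = i - m) := fun t h => absurd h hm
        simp [this]
    rw [Finset.sum_congr rfl (fun m _ => hstep m)]
    rw [Finset.sum_ite, Finset.sum_const, Finset.sum_const, smul_eq_mul, mul_one, smul_eq_mul]
    have hc₁ : (Finset.univ.filter (fun m : Fin N => i - m ∈ B)).card = ℓ := by
      rw [← hBcard]
      apply Finset.card_bij' (fun m _ => i - m) (fun v _ => i - v)
      · intro m hm; exact (Finset.mem_filter.mp hm).2
      · intro v hv
        simp only [Finset.mem_filter, Finset.mem_univ, true_and]
        rw [sub_sub_cancel]; exact hv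
      · intro m _; rw [sub_sub_cancel]
      · intro v _; rw [sub_sub_cancel]
    have hc₂ : (Finset.univ.filter (fun m : Fin N => ¬ (i - m ∈ B))).card = N - ℓ := by
      have := Finset.card_filter_add_card_filter_not
        (s := (Finset.univ : Finset (Fin N))) (p := fun m : Fin N => i - m ∈ B)
      rw [hc₁] at this
      simp only [Finset.card_univ, Fintype.card_fin] at this
      omega
    rw [hc₁, hc₂, mul_add, mul_one, mul_comm]
    exact le_of_eq (add_comm _ _)

theorem main_ge {N : ℕ} [NeZero N] (q : Type) [Field q]
    (K : Fin N → Finset (Fin N)) (ℓ : ℕ) (hN : N ≤ ℓ) :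
    ∃ (L : Matrix (Fin N × Fin N) (Fin (N * ℓ)) q) (R : Fin N → Finset (Fin (N * ℓ))),
      ValidVectorLinearCode q K L R ∧ ∀ i, (R i).card ≤ ℓ * (N - ℓ + 1) := by
  classical
  set e : Fin N × Fin ℓ ≃ Fin (N * ℓ) := finProdFinEquiv with he
  set L : Matrix (Fin N × Fin N) (Fin (N * ℓ)) q :=
    fun p k => if p.1.val = ((e.symm k).2).val ∧ p.2 = (e.symm k).1 then 1 else 0 with hL
  set R : Fin N → Finset (Fin (N * ℓ)) :=
    fun i => Finset.image e (Finset.univ.filter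
      (fun mt : Fin N × Fin ℓ => mt.2 = Fin.castLE hN i)) with hR
  refine ⟨L, R, ?_, ?_⟩
  · intro i m
    refine ⟨0, by simp, ?_⟩
    rw [zero_add]
    apply Submodule.subset_span
    refine ⟨e (m, Fin.castLE hN i), ?_, ?_⟩
    · simp [hR]
    · funext p
      simp only [hL, Equiv.symm_apply_apply, Fin.coe_castLE]
      rw [Pi.single_apply]
      congr 1
      rw [eq_iff_iff, Prod.ext_iff]
      constructor
      · rintro ⟨h1, h2⟩; exact ⟨Fin.val_injective h1, h2⟩
      · rintro ⟨h1, h2⟩; exact ⟨congrArg Fin.val h1, h2⟩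
  · intro i
    rw [hR, Finset.card_image_of_injective _ e.injective]
    have : (Finset.univ.filter
        (fun mt : Fin N × Fin ℓ => mt.2 = Fin.castLE hN i)).card = N := by
      have hbij : (Finset.univ.filter
          (fun mt : Fin N × Fin ℓ => mt.2 = Fin.castLE hN i)).card
          = (Finset.univ : Finset (Fin N)).card := by
        refine Finset.card_nbij' (fun mt => mt.1) (fun m => (m, Fin.castLE hN i)) ?_ ?_ ?_ ?_
        · intro a _; exact Finset.mem_univ _
        · intro a _
          simp only [Finset.coe_filter, Finset.mem_filter, Finset.mem_univ, true_and, Set.mem_setOf_eq]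
        · intro a ha
          have h2 := (Finset.mem_filter.mp ha).2
          exact Prod.ext rfl h2.symm
        · intro a _; rfl
      simpa using hbij
    rw [this]
    have h0 : N - ℓ = 0 := by omega
    rw [h0]
    simpa using hN

open Fin.NatCast in
theorem cyclic_symmetry_achievability
    {N : ℕ} [NeZero N] (q : Type) [Field q] [Fintype q]
    (K : Fin N → Finset (Fin N)) (hK : ∀ i, i ∉ K i)
    (hauto : ∀ i j : Fin N, j ∈ K i ↔ j + 1 ∈ K (i + 1))
    (ℓ : ℕ) (hℓ : minrk q K ≤ ℓ) :
    (∃ (L : Matrix (Fin N × Fin N) (Fin (N * ℓ)) q) (R : Fin N → Finset (Fin (N * ℓ))),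
        ValidVectorLinearCode q K L R ∧ ∀ i, (R i).card ≤ ℓ * (N - ℓ + 1)) ∧
    sInf {β : ℝ | ∃ (M ℓ' : ℕ) (L : Matrix (Fin N × Fin M) (Fin ℓ') q)
        (R : Fin N → Finset (Fin ℓ')),
        0 < M ∧ ValidVectorLinearCode q K L R ∧
        (∀ i, ((R i).card : ℝ) / M ≤ ((ℓ * (N - ℓ + 1) : ℕ) : ℝ) / N) ∧
        β = (ℓ' : ℝ) / M}
      ≤ ℓ := by
  classical
  -- shift lemma
  have hshift : ∀ (m : Fin N) (i j : Fin N), j ∈ K i ↔ j + m ∈ K (i + m) := by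
    have h : ∀ (c : ℕ) (i j : Fin N), j ∈ K i ↔ j + (c : Fin N) ∈ K (i + (c : Fin N)) := by
      intro c
      induction c with
      | zero => simp
      | succ c ih =>
        intro i j
        have hc : ((c+1 : ℕ) : Fin N) = (c : Fin N) + 1 := by push_cast; ring
        rw [hc, ← add_assoc, ← add_assoc]
        exact (ih i j).trans (hauto _ _)
    intro m i j
    simpa [Fin.cast_val_eq_self] using h m.val i j
  -- obtain a fitting matrix of minimal rank
  have hne : {n : ℕ | ∃ A : Matrix (Fin N) (Fin N) q,
      (∀ i, A i i = 1) ∧ (∀ i j, j ≠ i → j ∉ K i → A j i = 0) ∧ A.rank = n}.Nonempty := by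
    refine ⟨N, 1, fun i => Matrix.one_apply_eq i, fun i j hji _ => Matrix.one_apply_ne hji, ?_⟩
    simp [Matrix.rank_one]
  have hmem := Nat.sInf_mem hne
  obtain ⟨A, hdiag, hzero, hrank⟩ := hmem
  have hrankℓ : A.rank ≤ ℓ := by
    rw [hrank]; exact hℓ
  have hmain : ∃ (L : Matrix (Fin N × Fin N) (Fin (N * ℓ)) q)
      (R : Fin N → Finset (Fin (N * ℓ))),
      ValidVectorLinearCode q K L R ∧ ∀ i, (R i).card ≤ ℓ * (N - ℓ + 1) := by
    rcases le_total ℓ N with hle | hge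
    · exact main_le q K hshift ℓ hle A hdiag hzero hrankℓ
    · exact main_ge q K ℓ hge
  refine ⟨hmain, ?_⟩
  obtain ⟨L, R, hvalid, hcard⟩ := hmain
  have hN0 : (0 : ℝ) < N := by
    exact_mod_cast Nat.pos_of_ne_zero (NeZero.ne N)
  have hβ : (ℓ : ℝ) = ((N * ℓ : ℕ) : ℝ) / (N : ℕ) := by
    push_cast
    rw [mul_comm, mul_div_assoc, div_self (ne_of_gt hN0), mul_one]
  apply csInf_le
  · refine ⟨0, fun β hβm => ?_⟩
    obtain ⟨M, ℓ', _, _, hM, _, _, hβeq⟩ := hβm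
    rw [hβeq]
    positivity
  · refine ⟨N, N * ℓ, L, R, Nat.pos_of_ne_zero (NeZero.ne N), hvalid, ?_, hβ⟩
    intro i
    exact div_le_div_of_nonneg_right (by exact_mod_cast hcard i) hN0.le
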